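/- Let n ≥ 1 be an integer, ε = (ε_1, …, ε_{2n}) ∈ {±1}^{2n}, and let A = [c^1 | ⋯ | c^{2n}] be a 2n×2n real SSR(ε) matrix with columns c^1, …, c^{2n}. Then there exists a column vector c ∈ ℝ^{2n} such that the 2n×(2n+1) matrix [c^1 | ⋯ | c^n | c | c^{n+1} | ⋯ | c^{2n}], obtained by inserting c between the n-th and (n+1)-th columns of A, is SSR(ε). -/

import Mathlib

/-- `A` is strictly sign regular of order `p` with sign pattern `ε` (`SSR_p(ε)`):
for every `k ∈ {1, …, p}` (here `k = kk.val + 1` for `kk : Fin p`), every `k × k` minor of `A`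
(the determinant of the submatrix on any `k` rows and `k` columns taken in increasing order)
has sign `ε k`, i.e. `ε k` times the minor is strictly positive. -/
def IsSSRp (p : ℕ) {m n : ℕ} (A : Matrix (Fin m) (Fin n) ℝ) (ε : Fin p → ℝ) : Prop :=
  ∀ (kk : Fin p) (r : Fin (kk.val + 1) → Fin m) (c : Fin (kk.val + 1) → Fin n),
    StrictMono r → StrictMono c → 0 < ε kk * (A.submatrix r c).det


/-- weight of column `q` in the interleaved order from the gap at `n`. -/
def wgt (n q : ℕ) : ℕ := if q < n then 2*(n-1-q) else 2*(q-n)+1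

/-- the `j`-th column in the interleaved order. -/
def ocand (n j : ℕ) : ℕ := if j % 2 = 0 then n-1-j/2 else n+j/2

/-- sign of column `q`. -/
noncomputable def sg (n q : ℕ) : ℝ := (-1)^(if q < n then n-1-q else q-n)

lemma ocand_lt {n j : ℕ} (hn : 1 ≤ n) (hj : j < 2*n) : ocand n j < 2*n := by
  unfold ocand; split <;> omega

lemma wgt_lt {n q : ℕ} (hn : 1 ≤ n) (hq : q < 2*n) : wgt n q < 2*n := by
  unfold wgt; split <;> omega

lemma ocand_wgt {n q : ℕ} (hq : q < 2*n) : ocand n (wgt n q) = q := by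
  unfold wgt ocand; split <;> split <;> omega

lemma wgt_ocand {n j : ℕ} (hn : 1 ≤ n) (hj : j < 2*n) : wgt n (ocand n j) = j := by
  unfold wgt ocand; split <;> split <;> omega

/-- Linearity of the determinant in one column. -/
lemma det_updateColumn_sum' {k : ℕ} {ι : Type*} (M : Matrix (Fin k) (Fin k) ℝ) (s : Fin k)
    (S : Finset ι) (a : ι → ℝ) (f : ι → Fin k → ℝ) :
    (M.updateCol s (fun l => ∑ q ∈ S, a q * f q l)).det
      = ∑ q ∈ S, a q * (M.updateCol s (f q)).det := by
  classical
  induction S using Finset.induction_on with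
  | empty =>
      simp only [Finset.sum_empty]
      exact Matrix.det_eq_zero_of_column_eq_zero s (fun i => by simp)
  | @insert b T hb IH =>
      have h1 : (fun l => ∑ q ∈ insert b T, a q * f q l)
          = (fun l => (a b * f b l) + ∑ q ∈ T, a q * f q l) := by
        funext l; rw [Finset.sum_insert hb]
      rw [h1]
      have h2 : (fun l => (a b * f b l) + ∑ q ∈ T, a q * f q l)
          = (a b • f b) + (fun l => ∑ q ∈ T, a q * f q l) := by
        funext l; simp [mul_comm]
      rw [h2, Matrix.det_updateCol_add, Matrix.det_updateCol_smul, IH,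
        Finset.sum_insert hb]

/-- Moving a misplaced column `i` steps left. -/
lemma moveLeftAux {k N : ℕ} (M : Matrix (Fin k) (Fin N) ℝ) (e : ℝ)
    (hM : ∀ g : Fin k → Fin N, StrictMono g → 0 < e * (M.submatrix id g).det) :
    ∀ (i : ℕ) (s : Fin k) (g : Fin k → Fin N), i ≤ s.val →
      (∀ l m : Fin k, l < m → l ≠ s → m ≠ s → g l < g m) →
      (∀ l : Fin k, l.val + i < s.val → g l < g s) →
      (∀ l : Fin k, s.val ≤ l.val + i → l ≠ s → g s < g l) →
      0 < (-1:ℝ)^i * (e * (M.submatrix id g).det) := by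
  intro i
  induction i with
  | zero =>
      intro s g _ h1 h2 h3
      have hg : StrictMono g := by
        intro l m hlm
        by_cases hl : l = s
        · subst hl
          exact h3 m (by omega) (by exact fun h => absurd (h ▸ hlm) (lt_irrefl _))
        · by_cases hm : m = s
          · subst hm
            exact h2 l (by omega)
          · exact h1 l m hlm hl hm
      simpa using hM g hg
  | succ i IH =>
      intro s g hs h1 h2 h3
      have hs1 : 1 ≤ s.val := by omega
      set s' : Fin k := ⟨s.val - 1, by omega⟩ with hs'
      have hne : s' ≠ s := by
        intro h
        have := congrArg Fin.val h
        simp [hs'] at this; omega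
      set σ := Equiv.swap s' s with hσ
      set g' := g ∘ σ with hg'
      have hgs' : g' s' = g s := by simp [hg', hσ]
      have hgs : g' s = g s' := by simp [hg', hσ, Equiv.swap_apply_right]
      have hgo : ∀ l : Fin k, l ≠ s → l ≠ s' → g' l = g l := by
        intro l h h'
        simp [hg', hσ, Equiv.swap_apply_of_ne_of_ne h' h]
      have hs'v : s'.val = s.val - 1 := rfl
      have key := IH s' g' (by omega)
        (by -- off-s' monotone
          intro l m hlm hl hm
          by_cases hls : l = s
          · subst hls
            have hmm : m ≠ l := fun h => absurd (h ▸ hlm) (lt_irrefl _)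
            rw [hgs, hgo m hmm hm]
            have hvm : l.val < m.val := hlm
            have hs'm : s' < m := Fin.lt_def.2 (by omega)
            exact h1 s' m hs'm hne hmm
          · by_cases hms : m = s
            · subst hms
              rw [hgs, hgo l hls hl]
              have h1' : l.val < m.val := hlm
              have h2' : l.val ≠ m.val - 1 := fun h => hls (Fin.ext (by omega))
              have hls' : l < s' := Fin.lt_def.2 (by omega)
              exact h1 l s' hls' hls hne
            · rw [hgo l hls hl, hgo m hms hm]
              exact h1 l m hlm hls hms)
        (by -- below
          intro l hl
          have hlns : l ≠ s := fun h => by subst h; omega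
          have hlns' : l ≠ s' := fun h => by
            have := congrArg Fin.val h; rw [hs'v] at this; omega
          rw [hgo l hlns hlns', hgs']
          exact h2 l (by omega))
        (by -- above
          intro l hl hlne
          by_cases hls : l = s
          · subst hls
            rw [hgs', hgs]
            exact h3 s' (by omega) hne
          · rw [hgs', hgo l hls hlne]
            exact h3 l (by omega) hls)
      have hdet : (M.submatrix id g').det = -(M.submatrix id g).det := by
        have h4 : M.submatrix id g' = (M.submatrix id g).submatrix id σ := by
          rw [Matrix.submatrix_submatrix]; rfl
        rw [h4, Matrix.det_permute' σ (M.submatrix id g), hσ, Equiv.Perm.sign_swap hne]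
        simp
      rw [hdet] at key
      have : (0:ℝ) < (-1:ℝ)^(i+1) * (e * (M.submatrix id g).det) := by
        have heq : (-1:ℝ)^(i+1) * (e * (M.submatrix id g).det)
            = (-1:ℝ)^i * (e * -(M.submatrix id g).det) := by ring
        rw [heq]; exact key
      exact this

/-- Moving a misplaced column `i` steps right. -/
lemma moveRightAux {k N : ℕ} (M : Matrix (Fin k) (Fin N) ℝ) (e : ℝ)
    (hM : ∀ g : Fin k → Fin N, StrictMono g → 0 < e * (M.submatrix id g).det) :
    ∀ (i : ℕ) (s : Fin k) (g : Fin k → Fin N), s.val + i < k →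
      (∀ l m : Fin k, l < m → l ≠ s → m ≠ s → g l < g m) →
      (∀ l : Fin k, l.val ≤ s.val + i → l ≠ s → g l < g s) →
      (∀ l : Fin k, s.val + i < l.val → g s < g l) →
      0 < (-1:ℝ)^i * (e * (M.submatrix id g).det) := by
  intro i
  induction i with
  | zero =>
      intro s g _ h1 h2 h3
      have hg : StrictMono g := by
        intro l m hlm
        by_cases hm : m = s
        · subst hm
          exact h2 l (by omega) (by exact fun h => absurd (h ▸ hlm) (lt_irrefl _))
        · by_cases hl : l = s
          · subst hl
            exact h3 m (by omega)
          · exact h1 l m hlm hl hm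
      simpa using hM g hg
  | succ i IH =>
      intro s g hs h1 h2 h3
      set s1 : Fin k := ⟨s.val + 1, by omega⟩ with hs1
      have hne : s1 ≠ s := by
        intro h; have := congrArg Fin.val h; simp [hs1] at this
      set σ := Equiv.swap s1 s with hσ
      set g' := g ∘ σ with hg'
      have hgs1 : g' s1 = g s := by simp [hg', hσ]
      have hgs : g' s = g s1 := by simp [hg', hσ, Equiv.swap_apply_right]
      have hgo : ∀ l : Fin k, l ≠ s → l ≠ s1 → g' l = g l := by
        intro l h h'
        simp [hg', hσ, Equiv.swap_apply_of_ne_of_ne h' h]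
      have hs1v : s1.val = s.val + 1 := rfl
      have key := IH s1 g' (by omega)
        (by
          intro l m hlm hl hm
          by_cases hls : l = s
          · subst hls
            have hmm : m ≠ l := fun h => absurd (h ▸ hlm) (lt_irrefl _)
            rw [hgs, hgo m hmm hm]
            have h1' : l.val < m.val := hlm
            have h2' : m.val ≠ l.val + 1 := fun h => hm (Fin.ext (by
              have : s1.val = l.val + 1 := rfl
              omega))
            have hs1m : s1 < m := Fin.lt_def.2 (by
              have : s1.val = l.val + 1 := rfl
              omega)
            exact h1 s1 m hs1m hne hmm
          · by_cases hms : m = s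
            · subst hms
              rw [hgs, hgo l hls hl]
              have h1' : l.val < m.val := hlm
              have hls1 : l < s1 := Fin.lt_def.2 (by
                have : s1.val = m.val + 1 := rfl
                omega)
              exact h1 l s1 hls1 hls hne
            · rw [hgo l hls hl, hgo m hms hm]
              exact h1 l m hlm hls hms)
        (by
          intro l hl hlne
          by_cases hls : l = s
          · subst hls
            rw [hgs1, hgs]
            exact h2 s1 (by omega) hne
          · rw [hgs1, hgo l hls hlne]
            exact h2 l (by omega) hls)
        (by
          intro l hl
          have hlns : l ≠ s := fun h => by subst h; omega
          have hlns1 : l ≠ s1 := fun h => by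
            have := congrArg Fin.val h; rw [hs1v] at this; omega
          rw [hgo l hlns hlns1, hgs1]
          exact h3 l (by omega))
      have hdet : (M.submatrix id g').det = -(M.submatrix id g).det := by
        have h4 : M.submatrix id g' = (M.submatrix id g).submatrix id σ := by
          rw [Matrix.submatrix_submatrix]; rfl
        rw [h4, Matrix.det_permute' σ (M.submatrix id g), hσ, Equiv.Perm.sign_swap hne]
        simp
      rw [hdet] at key
      have heq : (-1:ℝ)^(i+1) * (e * (M.submatrix id g).det)
          = (-1:ℝ)^i * (e * -(M.submatrix id g).det) := by ring
      rw [heq]; exact key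

lemma succAbove_val' {N : ℕ} (p : Fin (N+1)) (q : Fin N) :
    (p.succAbove q).val = if q.val < p.val then q.val else q.val + 1 := by
  rcases lt_or_ge q.val p.val with h | h
  · rw [Fin.succAbove_of_castSucc_lt _ _ (Fin.lt_def.2 (by simpa using h))]
    simp [h]
  · rw [Fin.succAbove_of_le_castSucc _ _ (Fin.le_def.2 (by simpa using h))]
    rw [if_neg (not_lt.2 h)]
    simp

theorem stmt_11 (n : ℕ) (hn : 1 ≤ n) (ε : Fin (2 * n) → ℝ)
    (hε : ∀ i, ε i = 1 ∨ ε i = -1)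
    (A : Matrix (Fin (2 * n)) (Fin (2 * n)) ℝ) (hA : IsSSRp (2 * n) A ε) :
    ∃ c : Fin (2 * n) → ℝ,
      IsSSRp (2 * n)
        ((Matrix.of fun i => Fin.insertNth (⟨n, by omega⟩ : Fin (2 * n + 1)) (c i) (A i)) :
          Matrix (Fin (2 * n)) (Fin (2 * n + 1)) ℝ) ε := by
  classical
  set p : Fin (2*n+1) := ⟨n, by omega⟩ with hp
  set lam : ℝ → Fin (2*n) → ℝ := fun t q => sg n q.val * t ^ wgt n q.val with hlam
  set x : ℝ → Fin (2*n) → ℝ := fun t i => ∑ q : Fin (2*n), lam t q * A i q with hx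
  have key : ∀ᶠ t in nhdsWithin 0 (Set.Ioi (0:ℝ)),
      IsSSRp (2*n) ((Matrix.of fun i => Fin.insertNth p (x t i) (A i)) :
        Matrix (Fin (2*n)) (Fin (2*n+1)) ℝ) ε := by
    unfold IsSSRp
    rw [Filter.eventually_all]; intro kk
    rw [Filter.eventually_all]; intro r
    rw [Filter.eventually_all]; intro cs
    by_cases hr : StrictMono r
    swap
    · exact Filter.Eventually.of_forall (fun t h1 h2 => absurd h1 hr)
    by_cases hc : StrictMono cs
    swap
    · exact Filter.Eventually.of_forall (fun t h1 h2 => absurd h2 hc)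
    -- the inserted-column preimage map
    obtain ⟨cl, hclval⟩ : ∃ cl : Fin (kk.val+1) → Fin (2*n),
        ∀ l, (cl l).val = if (cs l).val ≤ n then (cs l).val else (cs l).val - 1 :=
      ⟨fun l => if h : (cs l).val ≤ n then ⟨(cs l).val, by omega⟩
        else ⟨(cs l).val - 1, by have := (cs l).isLt; omega⟩,
       fun l => by by_cases h : (cs l).val ≤ n <;> simp [h]⟩
    have hsucc : ∀ l, (cs l).val ≠ n → cs l = p.succAbove (cl l) := by
      intro l h
      have h1 := (cs l).isLt
      have h2 := hclval l
      apply Fin.ext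
      rw [succAbove_val']
      have hpv : p.val = n := rfl
      rw [hpv]
      split_ifs at h2 ⊢ <;> omega
    have hBA : ∀ (t : ℝ) l, (cs l).val ≠ n → ∀ i,
        (Matrix.of fun i => Fin.insertNth p (x t i) (A i)) i (cs l) = A i (cl l) := by
      intro t l h i
      rw [hsucc l h]
      simp [Fin.insertNth_apply_succAbove]
    by_cases hps : ∃ s0, cs s0 = p
    case neg =>
      have hcsne : ∀ l, (cs l).val ≠ n := by
        intro l h
        exact hps ⟨l, Fin.ext h⟩
      have hmono : StrictMono cl := by
        intro l m hlm
        have h1 := Fin.lt_def.1 (hc hlm)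
        have h2 := hclval l
        have h3 := hclval m
        have h4 := hcsne l
        have h5 := hcsne m
        apply Fin.lt_def.2
        split_ifs at h2 h3 <;> omega
      have hsubeq : ∀ t : ℝ, ((Matrix.of fun i => Fin.insertNth p (x t i) (A i)).submatrix r cs)
          = A.submatrix r cl := by
        intro t
        ext i j
        simp only [Matrix.submatrix_apply]
        exact hBA t j (hcsne j) (r i)
      exact Filter.Eventually.of_forall (fun t _ _ => by
        rw [hsubeq t]; exact hA kk r cl hr hmono)
    case pos =>
    obtain ⟨s, hs⟩ := hps
    have hsv : (cs s).val = n := by rw [hs]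
    have hlt : ∀ l, l < s → (cs l).val < n := by
      intro l h; have := Fin.lt_def.1 (hc h); omega
    have hgt : ∀ l, s < l → n < (cs l).val := by
      intro l h; have := Fin.lt_def.1 (hc h); omega
    have hcll : ∀ l, l < s → (cl l).val < n := by
      intro l h; have h1 := hlt l h; have h2 := hclval l; split_ifs at h2 <;> omega
    have hclg : ∀ l, s < l → n ≤ (cl l).val := by
      intro l h; have h1 := hgt l h; have h2 := hclval l; split_ifs at h2 <;> omega
    have hclvlt : ∀ l, l < s → (cl l).val = (cs l).val := by
      intro l h; have h1 := hlt l h; have h2 := hclval l; split_ifs at h2 <;> omega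
    have hclvgt : ∀ l, s < l → (cl l).val = (cs l).val - 1 := by
      intro l h; have h1 := hgt l h; have h2 := hclval l; split_ifs at h2 <;> omega
    have hclmono : ∀ l m, l < m → l ≠ s → m ≠ s → cl l < cl m := by
      intro l m hlm hl hm
      have hv := Fin.lt_def.1 (hc hlm)
      apply Fin.lt_def.2
      rcases lt_or_gt_of_ne hl with h1 | h1 <;> rcases lt_or_gt_of_ne hm with h2 | h2
      · rw [hclvlt l h1, hclvlt m h2]; omega
      · have := hcll l h1; have := hclg m h2; omega
      · exfalso; have := Fin.lt_def.1 h1; have := Fin.lt_def.1 h2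
        have := Fin.lt_def.1 hlm; omega
      · rw [hclvgt l h1, hclvgt m h2]
        have := hgt l h1; omega
    set D : Fin (2*n) → ℝ :=
      fun q => ε kk * (A.submatrix r (Function.update cl s q)).det with hD
    set InJ : ℕ → Prop := fun v => ∃ l, l ≠ s ∧ (cl l).val = v with hInJ
    -- determinant expansion
    have hexp : ∀ t : ℝ, ε kk *
        ((Matrix.of fun i => Fin.insertNth p (x t i) (A i)).submatrix r cs).det
        = ∑ q : Fin (2*n), lam t q * D q := by
      intro t
      have hsub : ((Matrix.of fun i => Fin.insertNth p (x t i) (A i)).submatrix r cs)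
          = (A.submatrix r cl).updateCol s (fun l => ∑ q : Fin (2*n), lam t q * A (r l) q) := by
        ext i j
        by_cases hj : j = s
        · rw [hj, Matrix.updateCol_self]
          simp only [Matrix.submatrix_apply, Matrix.of_apply]
          rw [hs, Fin.insertNth_apply_same]
        · rw [Matrix.updateCol_ne hj]
          simp only [Matrix.submatrix_apply, Matrix.updateCol_ne hj]
          have hne : (cs j).val ≠ n := by
            intro h
            exact hj (hc.injective (by rw [hs]; exact Fin.ext h))
          exact hBA t j hne (r i)
      rw [hsub, det_updateColumn_sum' (A.submatrix r cl) s Finset.univ (lam t)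
        (fun q l => A (r l) q), Finset.mul_sum]
      apply Finset.sum_congr rfl
      intro q _
      have hterm : (A.submatrix r cl).updateCol s (fun l => A (r l) q)
          = A.submatrix r (Function.update cl s q) := by
        ext i j
        by_cases hj : j = s
        · rw [hj, Matrix.updateCol_self]
          simp [Function.update_self]
        · rw [Matrix.updateCol_ne hj]
          simp [Matrix.submatrix_apply, Function.update_of_ne hj]
      rw [hterm]
      simp only [hD]
      ring
    have hD0 : ∀ q : Fin (2*n), InJ q.val → D q = 0 := by
      rintro q ⟨l, hl, hv⟩
      have hcleq : cl l = q := Fin.ext hv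
      simp only [hD]
      have : (A.submatrix r (Function.update cl s q)).det = 0 := by
        apply Matrix.det_zero_of_column_eq hl
        intro m
        simp [Matrix.submatrix_apply, Function.update_of_ne hl, Function.update_self, hcleq]
      rw [this, mul_zero]
    have hexJ : ∃ v : Fin (2*n), ¬ InJ v.val := by
      by_contra h
      push_neg at h
      choose w hw1 hw2 using h
      have hwinj : Function.Injective w := by
        intro v1 v2 hv
        apply Fin.ext
        rw [← hw2 v1, ← hw2 v2, hv]
      have hcard : (Finset.univ.image w).card ≤ (Finset.univ.erase s).card := by
        apply Finset.card_le_card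
        intro l hl
        rw [Finset.mem_image] at hl
        obtain ⟨v, _, hv⟩ := hl
        exact Finset.mem_erase.2 ⟨hv ▸ hw1 v, Finset.mem_univ _⟩
      rw [Finset.card_image_of_injective _ hwinj] at hcard
      simp [Finset.card_erase_of_mem] at hcard
      have := kk.isLt
      omega
    obtain ⟨v0, hv0⟩ := hexJ
    have hPex : ∃ j, j < 2*n ∧ ¬ InJ (ocand n j) :=
      ⟨wgt n v0.val, wgt_lt hn v0.isLt, by rwa [ocand_wgt v0.isLt]⟩
    obtain ⟨j', hj'lt, hj'nin, hdomJ⟩ : ∃ j', j' < 2*n ∧ ¬ InJ (ocand n j') ∧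
        ∀ j, j < j' → j < 2*n → InJ (ocand n j) := by
      refine ⟨Nat.find hPex, (Nat.find_spec hPex).1, (Nat.find_spec hPex).2, ?_⟩
      intro j h1 h2
      have h3 := Nat.find_min hPex h1
      push_neg at h3
      exact h3 h2
    have hdom : ∀ q : Fin (2*n), ¬ InJ q.val → j' ≤ wgt n q.val := by
      intro q hq
      by_contra h
      push_neg at h
      have := hdomJ _ h (wgt_lt hn q.isLt)
      rw [ocand_wgt q.isLt] at this
      exact hq this
    set qs : Fin (2*n) := ⟨ocand n j', ocand_lt hn hj'lt⟩ with hqs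
    have hqsv : qs.val = ocand n j' := rfl
    have hwq : wgt n qs.val = j' := by rw [hqsv, wgt_ocand hn hj'lt]
    have hqsnin : ¬ InJ qs.val := by rw [hqsv]; exact hj'nin
    set G : ℝ → ℝ := fun u => ∑ q : Fin (2*n), sg n q.val * u ^ (wgt n q.val - j') * D q
      with hG
    have hFG : ∀ t : ℝ, 0 < t → (∑ q : Fin (2*n), lam t q * D q) = t^j' * G t := by
      intro t ht
      simp only [hG]
      rw [Finset.mul_sum]
      apply Finset.sum_congr rfl
      intro q _
      by_cases hq : InJ q.val
      · rw [hD0 q hq]; ring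
      · have h1 : j' ≤ wgt n q.val := hdom q hq
        have h2 : t ^ wgt n q.val = t ^ j' * t ^ (wgt n q.val - j') := by
          rw [← pow_add]; congr 1; omega
        simp only [hlam]
        rw [h2]; ring
    have hG0 : G 0 = sg n qs.val * D qs := by
      simp only [hG]
      rw [Finset.sum_eq_single qs]
      · rw [hwq]
        simp
      · intro q _ hqne
        by_cases hq : InJ q.val
        · rw [hD0 q hq]; ring
        · have h1 : j' ≤ wgt n q.val := hdom q hq
          have h2 : wgt n q.val ≠ j' := by
            intro h
            apply hqne
            apply Fin.ext
            have := congrArg (ocand n) h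
            rw [ocand_wgt q.isLt] at this
            rw [this, hqsv]
          rw [zero_pow (by omega)]; ring
      · intro h; exact absurd (Finset.mem_univ qs) h
    have hGcont : Continuous G := by
      simp only [hG]
      apply continuous_finset_sum
      intro q _
      exact (continuous_const.mul (continuous_pow _)).mul continuous_const
    -- the M used in the move lemmas
    have hM : ∀ g : Fin (kk.val+1) → Fin (2*n), StrictMono g →
        0 < ε kk * ((A.submatrix r id).submatrix id g).det := by
      intro g hg
      have hEq : (A.submatrix r id).submatrix id g = A.submatrix r g := by
        ext i j; simp
      rw [hEq]
      exact hA kk r g hr hg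
    set g : Fin (kk.val+1) → Fin (2*n) := Function.update cl s qs with hgdef
    have c1 : ∀ l m, l < m → l ≠ s → m ≠ s → g l < g m := by
      intro l m h hl hm
      rw [hgdef]
      simp only [Function.update_of_ne hl, Function.update_of_ne hm]
      exact hclmono l m h hl hm
    have hgs : g s = qs := by rw [hgdef]; simp
    have hgo : ∀ l, l ≠ s → g l = cl l := by
      intro l hl; rw [hgdef]; simp [Function.update_of_ne hl]
    have hcore : 0 < sg n qs.val * D qs := by
      -- the chain bound on the left of the gap
      have chainL : ∀ c : ℕ, ∀ l : Fin (kk.val+1), l.val < s.val → s.val - 1 - l.val = c →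
          (cl l).val + c ≤ n - 1 := by
        intro c
        induction c with
        | zero =>
            intro l h1 _
            have := hcll l (Fin.lt_def.2 h1)
            omega
        | succ c IH =>
            intro l h1 h2
            have hl1 : l.val + 1 < kk.val + 1 := by have := s.isLt; omega
            have hv1 : (⟨l.val+1, hl1⟩ : Fin (kk.val+1)).val = l.val + 1 := rfl
            have e1 := hclmono l ⟨l.val+1, hl1⟩ (Fin.lt_def.2 (by omega))
              (fun h => by have := congrArg Fin.val h; omega)
              (fun h => by have := congrArg Fin.val h; rw [hv1] at this; omega)
            have e2 := IH ⟨l.val+1, hl1⟩ (by omega) (by omega)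
            have e3 := Fin.lt_def.1 e1
            omega
      -- the chain bound on the right of the gap
      have chainR : ∀ c : ℕ, ∀ l : Fin (kk.val+1), s.val < l.val → l.val - s.val - 1 = c →
          n + c ≤ (cl l).val := by
        intro c
        induction c with
        | zero =>
            intro l h1 _
            have := hclg l (Fin.lt_def.2 h1)
            omega
        | succ c IH =>
            intro l h1 h2
            have hl1 : l.val - 1 < kk.val + 1 := by have := l.isLt; omega
            have hv1 : (⟨l.val-1, hl1⟩ : Fin (kk.val+1)).val = l.val - 1 := rfl
            have e1 := hclmono ⟨l.val-1, hl1⟩ l (Fin.lt_def.2 (by omega))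
              (fun h => by have := congrArg Fin.val h; rw [hv1] at this; omega)
              (fun h => by have := congrArg Fin.val h; omega)
            have e2 := IH ⟨l.val-1, hl1⟩ (by omega) (by omega)
            have e3 := Fin.lt_def.1 e1
            omega
      rcases Nat.even_or_odd j' with he | ho
      · -- even minimal index: the new column's leading substitute lies left of the gap
        obtain ⟨i, hi⟩ := he
        have hiln : i < n := by omega
        have hqv : qs.val = n - 1 - i := by
          rw [hqsv, hi]
          simp only [ocand]
          split <;> omega
        have CL : ∀ d, d < i → ∃ l : Fin (kk.val+1),
            l.val < s.val ∧ s.val - 1 - l.val = d ∧ (cl l).val = n-1-d := by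
          intro d
          induction d using Nat.strong_induction_on with
          | _ d IH =>
            intro hd
            have hdn : d < n := by omega
            have hIn : InJ (n-1-d) := by
              have h1 : ocand n (2*d) = n-1-d := by simp only [ocand]; split <;> omega
              have h2 := hdomJ (2*d) (by omega) (by omega)
              rwa [h1] at h2
            obtain ⟨l, hls, hlv⟩ := hIn
            have hlltS : l.val < s.val := by
              rcases lt_or_gt_of_ne hls with h | h
              · exact Fin.lt_def.1 h
              · have := hclg l h; omega
            have hub := chainL (s.val - 1 - l.val) l hlltS rfl
            by_cases heq : s.val - 1 - l.val = d
            · exact ⟨l, hlltS, heq, hlv⟩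
            · have hlt2 : s.val - 1 - l.val < d := by omega
              obtain ⟨l0, h0a, h0b, h0c⟩ := IH _ hlt2 (by omega)
              have hll0 : l = l0 := Fin.ext (by omega)
              rw [hll0] at hlv
              omega
        have hileS : i ≤ s.val := by
          rcases Nat.eq_zero_or_pos i with h0 | h0
          · omega
          · obtain ⟨l, h1, h2, _⟩ := CL (i-1) (by omega)
            omega
        have c2 : ∀ l : Fin (kk.val+1), l.val + i < s.val → g l < g s := by
          intro l hli
          have hlns : l ≠ s := fun h => by have := congrArg Fin.val h; omega
          rw [hgo l hlns, hgs]
          apply Fin.lt_def.2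
          have hub := chainL (s.val-1-l.val) l (by omega) rfl
          have hne2 : (cl l).val ≠ qs.val := fun h => hqsnin ⟨l, hlns, h⟩
          omega
        have c3 : ∀ l : Fin (kk.val+1), s.val ≤ l.val + i → l ≠ s → g s < g l := by
          intro l hli hlns
          rw [hgo l hlns, hgs]
          apply Fin.lt_def.2
          rcases lt_or_gt_of_ne hlns with h | h
          · have hvls := Fin.lt_def.1 h
            have hd : s.val - 1 - l.val < i := by omega
            obtain ⟨l0, h0a, h0b, h0c⟩ := CL (s.val-1-l.val) hd
            have hll0 : l = l0 := Fin.ext (by omega)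
            rw [hll0]
            omega
          · have := hclg l h; omega
        have hmove := moveLeftAux (A.submatrix r id) (ε kk) hM i s g hileS c1 c2 c3
        have hEq2 : (A.submatrix r id).submatrix id g = A.submatrix r g := by
          ext a b; simp
        rw [hEq2] at hmove
        have hDg : D qs = ε kk * (A.submatrix r g).det := by
          simp only [hD, hgdef]
        have hsg : sg n qs.val = (-1:ℝ)^i := by
          rw [hqv]
          simp only [sg]
          rw [if_pos (by omega)]
          congr 1
          omega
        rw [hsg, hDg]
        exact hmove
      · -- odd minimal index: the leading substitute lies right of the gap
        obtain ⟨i, hi⟩ := ho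
        have hiln : i < n := by omega
        have hqv : qs.val = n + i := by
          rw [hqsv, hi]
          simp only [ocand]
          split <;> omega
        have CR : ∀ d, d < i → ∃ l : Fin (kk.val+1),
            s.val < l.val ∧ l.val - s.val - 1 = d ∧ (cl l).val = n+d := by
          intro d
          induction d using Nat.strong_induction_on with
          | _ d IH =>
            intro hd
            have hdn : d < n := by omega
            have hIn : InJ (n+d) := by
              have h1 : ocand n (2*d+1) = n+d := by simp only [ocand]; split <;> omega
              have h2 := hdomJ (2*d+1) (by omega) (by omega)
              rwa [h1] at h2
            obtain ⟨l, hls, hlv⟩ := hIn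
            have hlgtS : s.val < l.val := by
              rcases lt_or_gt_of_ne hls with h | h
              · have := hcll l (Fin.lt_def.2 (Fin.lt_def.1 h)); omega
              · exact Fin.lt_def.1 h
            have hub := chainR (l.val - s.val - 1) l hlgtS rfl
            by_cases heq : l.val - s.val - 1 = d
            · exact ⟨l, hlgtS, heq, hlv⟩
            · have hlt2 : l.val - s.val - 1 < d := by omega
              obtain ⟨l0, h0a, h0b, h0c⟩ := IH _ hlt2 (by omega)
              have hll0 : l = l0 := Fin.ext (by omega)
              rw [hll0] at hlv
              omega
        have hisR : s.val + i < kk.val + 1 := by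
          rcases Nat.eq_zero_or_pos i with h0 | h0
          · have := s.isLt; omega
          · obtain ⟨l, h1, h2, _⟩ := CR (i-1) (by omega)
            have := l.isLt; omega
        have c2R : ∀ l : Fin (kk.val+1), l.val ≤ s.val + i → l ≠ s → g l < g s := by
          intro l hli hlns
          rw [hgo l hlns, hgs]
          apply Fin.lt_def.2
          rcases lt_or_gt_of_ne hlns with h | h
          · have := hcll l h; omega
          · have hvls := Fin.lt_def.1 h
            have hd : l.val - s.val - 1 < i := by omega
            obtain ⟨l0, h0a, h0b, h0c⟩ := CR (l.val - s.val - 1) hd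
            have hll0 : l = l0 := Fin.ext (by omega)
            rw [hll0]
            omega
        have c3R : ∀ l : Fin (kk.val+1), s.val + i < l.val → g s < g l := by
          intro l hli
          have hlns : l ≠ s := fun h => by have := congrArg Fin.val h; omega
          rw [hgo l hlns, hgs]
          apply Fin.lt_def.2
          have hub := chainR (l.val - s.val - 1) l (by omega) rfl
          have hne2 : (cl l).val ≠ qs.val := fun h => hqsnin ⟨l, hlns, h⟩
          omega
        have hmove := moveRightAux (A.submatrix r id) (ε kk) hM i s g hisR c1 c2R c3R
        have hEq2 : (A.submatrix r id).submatrix id g = A.submatrix r g := by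
          ext a b; simp
        rw [hEq2] at hmove
        have hDg : D qs = ε kk * (A.submatrix r g).det := by
          simp only [hD, hgdef]
        have hsg : sg n qs.val = (-1:ℝ)^i := by
          rw [hqv]
          simp only [sg]
          rw [if_neg (by omega)]
          congr 1
          omega
        rw [hsg, hDg]
        exact hmove

    have h2' : 0 < G 0 := by rw [hG0]; exact hcore
    have h1' : ∀ᶠ u in nhds (0:ℝ), 0 < G u :=
      hGcont.continuousAt.eventually (eventually_gt_nhds h2')
    have h3' : ∀ᶠ t in nhdsWithin 0 (Set.Ioi (0:ℝ)), 0 < G t :=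
      h1'.filter_mono nhdsWithin_le_nhds
    refine (h3'.and eventually_mem_nhdsWithin).mono ?_
    rintro t ⟨hGt, ht⟩ _ _
    rw [hexp t, hFG t ht]
    exact mul_pos (pow_pos ht _) hGt
  obtain ⟨t, ht⟩ := key.exists
  exact ⟨x t, ht⟩
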